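/- Let f, g be continuous on [t₀, τ₀) with f ≥ 0, and let y be a solution of the Riccati equation y' + f(t)y² + g(t) = 0 on an interval (t₁, t₂) ⊆ (t₀, τ₀) that cannot be continued to the right past t₂ < τ₀. Then y(t) → -∞ as t → t₂⁻. -/

import Mathlib

open Set Filter Metric

/-- Lipschitz bound for the Riccati vector field on a closed ball. -/
lemma riccati_lipschitzOnWith (c G F L ρ : ℝ) (hc : |c| ≤ F) (hρ : 0 ≤ ρ) :
    LipschitzOnWith (Real.toNNReal (F * (2 * (|L| + ρ))))
      (fun x : ℝ => -(c * x ^ 2 + G)) (closedBall L ρ) := by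
  apply LipschitzOnWith.of_dist_le_mul
  intro x hx x' hx'
  have hF0 : 0 ≤ F := (abs_nonneg c).trans hc
  rw [Real.coe_toNNReal _ (by positivity)]
  have hx1 : |x - L| ≤ ρ := by simpa [Real.dist_eq] using (mem_closedBall.mp hx)
  have hx'1 : |x' - L| ≤ ρ := by simpa [Real.dist_eq] using (mem_closedBall.mp hx')
  have h1 : |x| ≤ |L| + ρ := by
    have := abs_sub_abs_le_abs_sub x L; linarith
  have h2 : |x'| ≤ |L| + ρ := by
    have := abs_sub_abs_le_abs_sub x' L; linarith
  have key : (-(c * x ^ 2 + G)) - (-(c * x' ^ 2 + G)) = c * ((x' - x) * (x' + x)) := by ring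
  rw [Real.dist_eq, Real.dist_eq, key, abs_mul, abs_mul, abs_sub_comm x' x, add_comm x' x]
  have h3 : |x + x'| ≤ 2 * (|L| + ρ) := by
    have := abs_add_le x x'; linarith
  have h4 : 0 ≤ |x - x'| := abs_nonneg _
  have h5 : 0 ≤ |x + x'| := abs_nonneg _
  have h6 : |c| * (|x - x'| * |x + x'|) ≤ F * (|x - x'| * (2 * (|L| + ρ))) := by
    have : |x - x'| * |x + x'| ≤ |x - x'| * (2 * (|L| + ρ)) :=
      mul_le_mul_of_nonneg_left h3 h4
    calc |c| * (|x - x'| * |x + x'|) ≤ F * (|x - x'| * |x + x'|) :=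
          mul_le_mul_of_nonneg_right hc (by positivity)
      _ ≤ F * (|x - x'| * (2 * (|L| + ρ))) := mul_le_mul_of_nonneg_left this hF0
  calc |c| * (|x - x'| * |x + x'|) ≤ F * (|x - x'| * (2 * (|L| + ρ))) := h6
    _ = F * (2 * (|L| + ρ)) * |x - x'| := by ring


/-- Remark 2.3: if a solution `y` of `y' + f y² + g = 0` (`f ≥ 0`) on `(t₁,t₂) ⊆ (t₀,τ₀)`
cannot be continued to the right past `t₂ < τ₀`, then `y(t) → -∞` as `t → t₂⁻`. -/
theorem riccati_blowup_not_continuable_right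
    (t₀ τ₀ : ℝ) (f g : ℝ → ℝ)
    (hf : ContinuousOn f (Ico t₀ τ₀)) (hg : ContinuousOn g (Ico t₀ τ₀))
    (hf0 : ∀ t ∈ Ico t₀ τ₀, 0 ≤ f t)
    (t₁ t₂ : ℝ) (h01 : t₀ ≤ t₁) (h12 : t₁ < t₂) (h2τ : t₂ < τ₀)
    (y : ℝ → ℝ)
    (hy : ∀ t ∈ Ioo t₁ t₂, HasDerivAt y (-(f t * y t ^ 2 + g t)) t)
    -- `y` is not continuable to the right from `t₂`
    (hnc : ¬ ∃ t₂' : ℝ, t₂ < t₂' ∧ t₂' ≤ τ₀ ∧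
      ∃ z : ℝ → ℝ, (∀ t ∈ Ioo t₁ t₂, z t = y t) ∧
        ∀ t ∈ Ioo t₁ t₂', HasDerivAt z (-(f t * z t ^ 2 + g t)) t) :
    Tendsto y (nhdsWithin t₂ (Iio t₂)) atBot := by
  by_contra hcon
  apply hnc
  set v : ℝ → ℝ → ℝ := fun t x => -(f t * x ^ 2 + g t) with hvdef
  set c : ℝ := (t₁ + t₂) / 2 with hcdef
  set τ' : ℝ := (t₂ + τ₀) / 2 with hτ'def
  have hc1 : t₁ < c := by rw [hcdef]; linarith
  have hc2 : c < t₂ := by rw [hcdef]; linarith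
  have hτ1 : t₂ < τ' := by rw [hτ'def]; linarith
  have hτ2 : τ' < τ₀ := by rw [hτ'def]; linarith
  have hsub : Icc c τ' ⊆ Ico t₀ τ₀ := fun t ht =>
    ⟨le_trans (le_trans h01 hc1.le) ht.1, lt_of_le_of_lt ht.2 hτ2⟩
  have hsub2 : Icc c t₂ ⊆ Icc c τ' := Icc_subset_Icc le_rfl hτ1.le
  have hIooc : Ioo c t₂ ⊆ Ioo t₁ t₂ := Ioo_subset_Ioo hc1.le le_rfl
  -- bounds on f and g
  obtain ⟨F₀, hF₀⟩ := isCompact_Icc.exists_bound_of_continuousOn (hf.mono hsub)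
  obtain ⟨G₀, hG₀⟩ := isCompact_Icc.exists_bound_of_continuousOn (hg.mono hsub)
  set F : ℝ := max F₀ 0 with hFdef
  set M : ℝ := max G₀ 0 with hMdef
  have hFb : ∀ t ∈ Icc c τ', |f t| ≤ F := fun t ht =>
    le_trans (by simpa [Real.norm_eq_abs] using hF₀ t ht) (le_max_left _ _)
  have hMb : ∀ t ∈ Icc c τ', |g t| ≤ M := fun t ht =>
    le_trans (by simpa [Real.norm_eq_abs] using hG₀ t ht) (le_max_left _ _)
  have hF0' : 0 ≤ F := le_max_right _ _
  have hM0 : 0 ≤ M := le_max_right _ _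
  -- the auxiliary antitone function u
  set u : ℝ → ℝ := fun t => y t - M * t with hudef
  have hu_deriv : ∀ t ∈ Ioo t₁ t₂, HasDerivAt u (-(f t * y t ^ 2 + g t) - M) t := by
    intro t ht
    have h1 : HasDerivAt (fun s : ℝ => M * s) M t := by
      simpa using (hasDerivAt_id t).const_mul M
    exact (hy t ht).sub h1
  have hu_anti : AntitoneOn u (Ico c t₂) := by
    apply antitoneOn_of_deriv_nonpos (convex_Ico c t₂)
    · intro t ht
      exact (hu_deriv t ⟨lt_of_lt_of_le hc1 ht.1, ht.2⟩).continuousAt.continuousWithinAt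
    · intro t ht
      rw [interior_Ico] at ht
      exact (hu_deriv t (hIooc ht)).differentiableAt.differentiableWithinAt
    · intro t ht
      rw [interior_Ico] at ht
      rw [(hu_deriv t (hIooc ht)).deriv]
      have h1 : 0 ≤ f t := hf0 t (hsub ⟨ht.1.le, le_trans ht.2.le hτ1.le⟩)
      have h2 : |g t| ≤ M := hMb t ⟨ht.1.le, le_trans ht.2.le hτ1.le⟩
      have h3 : 0 ≤ f t * y t ^ 2 := mul_nonneg h1 (sq_nonneg _)
      have := abs_le.mp h2
      linarith [this.1, this.2]
  -- from ¬Tendsto atBot, get a frequent lower bound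
  rw [tendsto_atBot] at hcon
  push_neg at hcon
  obtain ⟨b, hb⟩ := hcon
  -- lower bound for y on [c, t₂)
  have hlow : ∀ t ∈ Ico c t₂, b - M * (t₂ - c) ≤ y t := by
    intro t ht
    obtain ⟨s, hs1, hs2⟩ := (hb.and_eventually (Ioo_mem_nhdsLT ht.2)).exists
    have hus : u s ≤ u t := hu_anti ht ⟨le_trans ht.1 hs2.1.le, hs2.2⟩ hs2.1.le
    have hys : b < y s := hs1
    have h4 : M * (s - t) ≤ M * (t₂ - c) :=
      mul_le_mul_of_nonneg_left (by linarith [hs2.2, ht.1]) hM0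
    simp only [hudef] at hus
    linarith
  -- u is bounded below on (c, t₂), hence tends to a limit
  have hbdd : BddBelow (u '' Ioo c t₂) := by
    refine ⟨b - M * (t₂ - c) - M * t₂, ?_⟩
    rintro _ ⟨t, ht, rfl⟩
    have h1 := hlow t ⟨ht.1.le, ht.2⟩
    have h2 : M * t ≤ M * t₂ := mul_le_mul_of_nonneg_left ht.2.le hM0
    simp only [hudef]
    linarith
  have hLu : Tendsto u (nhdsWithin t₂ (Iio t₂)) (nhds (sInf (u '' Ioo c t₂))) :=
    AntitoneOn.tendsto_nhdsWithin_Ioo_left (nonempty_Ioo.2 hc2)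
      (hu_anti.mono Ioo_subset_Ico_self) hbdd
  set L : ℝ := sInf (u '' Ioo c t₂) + M * t₂ with hLdef
  have hL : Tendsto y (nhdsWithin t₂ (Iio t₂)) (nhds L) := by
    have h1 : Tendsto (fun t => M * t) (nhdsWithin t₂ (Iio t₂)) (nhds (M * t₂)) :=
      ((continuous_const.mul continuous_id).tendsto t₂).mono_left nhdsWithin_le_nhds
    have h2 := hLu.add h1
    refine h2.congr fun t => ?_
    simp [hudef]
  -- extension of y to t₂
  set Y : ℝ → ℝ := fun t => if t < t₂ then y t else L with hYdef
  have hYy : ∀ t, t < t₂ → Y t = y t := fun t ht => if_pos ht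
  have hYt₂ : Y t₂ = L := if_neg (lt_irrefl t₂)
  have hYlim : Tendsto Y (nhdsWithin t₂ (Iio t₂)) (nhds L) := by
    refine hL.congr' ?_
    filter_upwards [self_mem_nhdsWithin] with t ht
    exact (hYy t ht).symm
  have hYd : ∀ t ∈ Ioo t₁ t₂, HasDerivAt Y (v t (y t)) t := by
    intro t ht
    have he : Y =ᶠ[nhds t] y := by
      filter_upwards [Iio_mem_nhds ht.2] with s hs
      exact hYy s hs
    exact (he.hasDerivAt_iff).mpr (hy t ht)
  have hYcont_Iic : ContinuousWithinAt Y (Iic t₂) t₂ := by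
    have h1 : Tendsto Y (nhdsWithin t₂ {t₂}) (nhds L) := by
      rw [nhdsWithin_singleton]
      simpa [hYt₂] using tendsto_pure_nhds Y t₂
    have h2 : Tendsto Y (nhdsWithin t₂ (Iic t₂)) (nhds L) := by
      have he : Iic t₂ = Iio t₂ ∪ {t₂} := by rw [Iio_union_right]
      rw [he, nhdsWithin_union]
      exact tendsto_sup.mpr ⟨hYlim, h1⟩
    simpa [ContinuousWithinAt, hYt₂] using h2
  have hYderiv_t₂ : HasDerivWithinAt Y (v t₂ L) (Iic t₂) t₂ := by
    apply hasDerivWithinAt_Iic_of_tendsto_deriv (s := Ioo c t₂)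
    · intro t ht
      exact (hYd t (hIooc ht)).differentiableAt.differentiableWithinAt
    · exact hYcont_Iic.mono fun x hx => hx.2.le
    · exact Ioo_mem_nhdsLT hc2
    · have hmem : t₂ ∈ Icc c τ' := ⟨hc2.le, hτ1.le⟩
      have hmono : nhdsWithin t₂ (Iio t₂) ≤ nhdsWithin t₂ (Icc c τ') := by
        rw [← nhdsWithin_Ioo_eq_nhdsLT hc2]
        exact nhdsWithin_mono _ fun x hx => ⟨hx.1.le, le_trans hx.2.le hτ1.le⟩
      have hft : Tendsto f (nhdsWithin t₂ (Iio t₂)) (nhds (f t₂)) :=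
        ((hf.mono hsub) t₂ hmem).mono_left hmono
      have hgt : Tendsto g (nhdsWithin t₂ (Iio t₂)) (nhds (g t₂)) :=
        ((hg.mono hsub) t₂ hmem).mono_left hmono
      have hfin : Tendsto (fun t => v t (y t)) (nhdsWithin t₂ (Iio t₂)) (nhds (v t₂ L)) := by
        simp only [hvdef]
        exact ((hft.mul (hL.pow 2)).add hgt).neg
      refine hfin.congr' ?_
      filter_upwards [Ioo_mem_nhdsLT hc2] with t ht
      exact ((hYd t (hIooc ht)).deriv).symm
  -- Picard-Lindelof setup
  set C : ℝ := F * (|L| + 1) ^ 2 + M with hCdef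
  have hC0 : 0 ≤ C := by positivity
  set ε : ℝ := min (min (τ' - t₂) (t₂ - c)) (1 / (C + 1)) with hεdef
  have hε : 0 < ε := lt_min (lt_min (by linarith) (by linarith)) (by positivity)
  have hε1 : ε ≤ τ' - t₂ := le_trans (min_le_left _ _) (min_le_left _ _)
  have hε2 : ε ≤ t₂ - c := le_trans (min_le_left _ _) (min_le_right _ _)
  have hε3 : ε ≤ 1 / (C + 1) := min_le_right _ _
  have hsub3 : Icc (t₂ - ε) (t₂ + ε) ⊆ Icc c τ' := Icc_subset_Icc (by linarith) (by linarith)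
  have hsub4 : Icc (t₂ - ε) (t₂ + ε) ⊆ Ico t₀ τ₀ := fun t ht => hsub (hsub3 ht)
  have ht₂mem : t₂ ∈ Icc (t₂ - ε) (t₂ + ε) := ⟨by linarith, by linarith⟩
  have hPL : IsPicardLindelof v (tmin := t₂ - ε) (tmax := t₂ + ε) ⟨t₂, ht₂mem⟩ L 1 0
      (Real.toNNReal C) (Real.toNNReal (F * (2 * (|L| + 1)))) := by
    constructor
    · intro t ht
      rw [hvdef, NNReal.coe_one]
      exact riccati_lipschitzOnWith (f t) (g t) F L 1 (hFb t (hsub3 ht)) zero_le_one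
    · intro x _
      rw [hvdef]
      exact (((hf.mono hsub4).mul continuousOn_const).add (hg.mono hsub4)).neg
    · intro t ht x hx
      have h1 : |f t| ≤ F := hFb t (hsub3 ht)
      have h2 : |g t| ≤ M := hMb t (hsub3 ht)
      have h3 : |x - L| ≤ 1 := by simpa [Real.dist_eq] using mem_closedBall.mp hx
      have h4 : |x| ≤ |L| + 1 := by have := abs_sub_abs_le_abs_sub x L; linarith
      have h5 : x ^ 2 ≤ (|L| + 1) ^ 2 := by nlinarith [sq_abs x, abs_nonneg x]
      have h6 : |f t| * x ^ 2 ≤ F * (|L| + 1) ^ 2 :=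
        mul_le_mul h1 h5 (sq_nonneg x) hF0'
      have h7 : ‖v t x‖ ≤ |f t| * x ^ 2 + |g t| := by
        rw [hvdef]
        simp only [Real.norm_eq_abs, abs_neg]
        refine le_trans (abs_add_le _ _) ?_
        rw [abs_mul, abs_of_nonneg (sq_nonneg x)]
      rw [Real.coe_toNNReal _ hC0, hCdef]
      linarith
    · simp only [Real.coe_toNNReal _ hC0, NNReal.coe_one, NNReal.coe_zero, sub_zero]
      have e1 : t₂ + ε - t₂ = ε := by ring
      have e2 : t₂ - (t₂ - ε) = ε := by ring
      rw [e1, e2, max_self]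
      have h1 : C * ε ≤ C * (1 / (C + 1)) := mul_le_mul_of_nonneg_left hε3 hC0
      have h2 : C * (1 / (C + 1)) ≤ 1 := by
        rw [mul_one_div]
        exact div_le_one_of_le₀ (by linarith) (by positivity)
      exact h1.trans h2
  obtain ⟨z₀, hz₀init', hz₀d⟩ := IsPicardLindelof.exists_eq_forall_mem_Icc_hasDerivWithinAt₀ hPL
  have hz₀init : z₀ t₂ = L := hz₀init'
  have hz₀cont : ContinuousOn z₀ (Icc (t₂ - ε) (t₂ + ε)) := fun t ht =>
    (hz₀d t ht).continuousWithinAt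
  have hz₀at : ∀ t ∈ Ioo (t₂ - ε) (t₂ + ε), HasDerivAt z₀ (v t (z₀ t)) t := fun t ht =>
    (hz₀d t (Ioo_subset_Icc_self ht)).hasDerivAt (Icc_mem_nhds ht.1 ht.2)
  -- uniqueness on [t₂ - ε, t₂]
  set a : ℝ := t₂ - ε with hadef
  have hac : c ≤ a := by rw [hadef]; linarith
  have hat₁ : t₁ < a := lt_of_lt_of_le hc1 hac
  have hat₂ : a < t₂ := by rw [hadef]; linarith
  have hsub5 : Icc a t₂ ⊆ Icc c τ' := fun t ht => ⟨le_trans hac ht.1, le_trans ht.2 hτ1.le⟩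
  have hsub6 : Icc a t₂ ⊆ Icc (t₂ - ε) (t₂ + ε) := Icc_subset_Icc le_rfl (by linarith)
  have hYcont : ContinuousOn Y (Icc a t₂) := by
    intro t ht
    rcases lt_or_eq_of_le ht.2 with h | h
    · exact (hYd t ⟨lt_of_lt_of_le hat₁ ht.1, h⟩).continuousAt.continuousWithinAt
    · subst h
      exact hYcont_Iic.mono fun x hx => hx.2
  obtain ⟨ρ₁, hρ₁⟩ := isCompact_Icc.exists_bound_of_continuousOn
    ((hYcont.sub continuousOn_const) : ContinuousOn (fun t => Y t - L) (Icc a t₂))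
  obtain ⟨ρ₂, hρ₂⟩ := isCompact_Icc.exists_bound_of_continuousOn
    (((hz₀cont.mono hsub6).sub continuousOn_const) : ContinuousOn (fun t => z₀ t - L) (Icc a t₂))
  set ρ : ℝ := max ρ₁ ρ₂ with hρdef
  have hρ0 : 0 ≤ ρ :=
    le_trans (norm_nonneg (Y t₂ - L)) (le_trans (hρ₁ t₂ ⟨hat₂.le, le_rfl⟩) (le_max_left _ _))
  set S : ℝ → Set ℝ := fun t => if t ∈ Icc a t₂ then closedBall L ρ else (∅ : Set ℝ) with hSdef
  have hvlip : ∀ t, LipschitzOnWith (Real.toNNReal (F * (2 * (|L| + ρ)))) (v t) (S t) := by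
    intro t
    by_cases ht : t ∈ Icc a t₂
    · rw [hSdef]
      simp only [if_pos ht]
      rw [hvdef]
      exact riccati_lipschitzOnWith (f t) (g t) F L ρ (hFb t (hsub5 ht)) hρ0
    · rw [hSdef]
      simp only [if_neg ht]
      exact lipschitzOnWith_empty _ _
  have hYmem : ∀ t ∈ Ioc a t₂, Y t ∈ S t := by
    intro t ht
    have ht' : t ∈ Icc a t₂ := ⟨ht.1.le, ht.2⟩
    rw [hSdef]
    simp only [if_pos ht', mem_closedBall, Real.dist_eq]
    exact le_trans (by simpa [Real.norm_eq_abs] using hρ₁ t ht') (le_max_left _ _)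
  have hz₀mem : ∀ t ∈ Ioc a t₂, z₀ t ∈ S t := by
    intro t ht
    have ht' : t ∈ Icc a t₂ := ⟨ht.1.le, ht.2⟩
    rw [hSdef]
    simp only [if_pos ht', mem_closedBall, Real.dist_eq]
    exact le_trans (by simpa [Real.norm_eq_abs] using hρ₂ t ht') (le_max_right _ _)
  have hYd' : ∀ t ∈ Ioc a t₂, HasDerivWithinAt Y (v t (Y t)) (Iic t) t := by
    intro t ht
    rcases lt_or_eq_of_le ht.2 with h | h
    · have h0 := hYd t ⟨lt_of_lt_of_le hat₁ ht.1.le, h⟩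
      rw [hYy t h]
      exact h0.hasDerivWithinAt
    · subst h
      rw [hYt₂]
      exact hYderiv_t₂
  have hz₀d' : ∀ t ∈ Ioc a t₂, HasDerivWithinAt z₀ (v t (z₀ t)) (Iic t) t := by
    intro t ht
    have h1 : t ∈ Icc (t₂ - ε) (t₂ + ε) := hsub6 ⟨ht.1.le, ht.2⟩
    refine (hz₀d t h1).mono_of_mem_nhdsWithin ?_
    refine mem_nhdsWithin.mpr ⟨Ioi (t₂ - ε), isOpen_Ioi, ht.1, ?_⟩
    rintro x ⟨hx1, hx2⟩
    exact ⟨le_of_lt hx1, le_trans hx2 (by linarith [ht.2])⟩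
  have huniq : EqOn Y z₀ (Icc a t₂) :=
    ODE_solution_unique_of_mem_Icc_left (fun t _ => hvlip t) hYcont hYd' hYmem
      (hz₀cont.mono hsub6) hz₀d' hz₀mem (by rw [hYt₂, hz₀init])
  -- construct the continuation
  refine ⟨t₂ + ε, by linarith, by linarith, fun t => if t < t₂ then y t else z₀ t, ?_, ?_⟩
  · intro t ht
    exact if_pos ht.2
  · intro t ht
    by_cases htc : t < t₂
    · have he : (fun s => if s < t₂ then y s else z₀ s) =ᶠ[nhds t] y := by
        filter_upwards [Iio_mem_nhds htc] with s hs
        exact if_pos hs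
      have h0 : HasDerivAt y (-(f t * y t ^ 2 + g t)) t := hy t ⟨ht.1, htc⟩
      have hval : (if t < t₂ then y t else z₀ t) = y t := if_pos htc
      show HasDerivAt (fun s => if s < t₂ then y s else z₀ s)
        (-(f t * (if t < t₂ then y t else z₀ t) ^ 2 + g t)) t
      rw [hval]
      exact he.hasDerivAt_iff.mpr h0
    · push_neg at htc
      have htI : t ∈ Ioo a (t₂ + ε) := ⟨lt_of_lt_of_le hat₂ htc, ht.2⟩
      have he : (fun s => if s < t₂ then y s else z₀ s) =ᶠ[nhds t] z₀ := by
        filter_upwards [isOpen_Ioo.mem_nhds htI] with s hs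
        by_cases hsc : s < t₂
        · rw [if_pos hsc, ← hYy s hsc]
          exact huniq ⟨hs.1.le, hsc.le⟩
        · exact if_neg hsc
      have h0 : HasDerivAt z₀ (v t (z₀ t)) t := hz₀at t ⟨htI.1, htI.2⟩
      simp only [hvdef] at h0
      have hval : (if t < t₂ then y t else z₀ t) = z₀ t := if_neg (not_lt.mpr htc)
      show HasDerivAt (fun s => if s < t₂ then y s else z₀ s)
        (-(f t * (if t < t₂ then y t else z₀ t) ^ 2 + g t)) t
      rw [hval]
      exact he.hasDerivAt_iff.mpr h0
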